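/- Fix p > 2, N ≥ 1, and the cutoff Θ_N as above. The truncated nonlinearity q_N(ξ) = Θ_N(‖ξ‖_{L^p}) ξ (k*ξ) is globally Lipschitz from L^p(D) to [L^p(D)]²: there exists L_{N,p} > 0 such that ‖q_N(ξ) - q_N(η)‖_{L^p} ≤ L_{N,p} ‖ξ - η‖_{L^p} for all ξ, η ∈ L^p(D). -/

import Mathlib

open Real MeasureTheory

/-- The fundamental domain `D = [0,2π]²` of the torus. -/
noncomputable def torusD : Set (ℝ × ℝ) := Set.Icc ((0:ℝ), (0:ℝ)) (2 * π, 2 * π)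

open scoped ENNReal NNReal in
private lemma trunc_lip_aux
    (p : ℝ) (hp : 2 < p) (N : ℝ) (hN : 1 ≤ N)
    (Θ : ℝ → ℝ) (hΘdiff : ContDiff ℝ 1 Θ)
    (hΘrange : ∀ s : ℝ, 0 ≤ s → Θ s ∈ Set.Icc (0:ℝ) 1)
    (hΘzero : ∀ s : ℝ, N + 1 ≤ s → Θ s = 0)
    (hΘder : ∀ s : ℝ, |deriv Θ s| ≤ 2)
    (Cp : ℝ) (hCp : 0 < Cp)
    (K : (ℝ × ℝ → ℝ) → (ℝ × ℝ → ℝ × ℝ))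
    (hKadd : ∀ ξ η : ℝ × ℝ → ℝ, K (ξ + η) = K ξ + K η)
    (hK : ∀ ξ : ℝ × ℝ → ℝ, MemLp ξ (ENNReal.ofReal p) (volume.restrict torusD) →
      eLpNorm (K ξ) ⊤ (volume.restrict torusD)
        ≤ ENNReal.ofReal (Cp * (eLpNorm ξ (ENNReal.ofReal p) (volume.restrict torusD)).toReal))
    (ξ η : ℝ × ℝ → ℝ)
    (hξ : MemLp ξ (ENNReal.ofReal p) (volume.restrict torusD))
    (hη : MemLp η (ENNReal.ofReal p) (volume.restrict torusD))
    (hle : (eLpNorm η (ENNReal.ofReal p) (volume.restrict torusD)).toReal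
        ≤ (eLpNorm ξ (ENNReal.ofReal p) (volume.restrict torusD)).toReal) :
    eLpNorm
      (fun x => Θ ((eLpNorm ξ (ENNReal.ofReal p) (volume.restrict torusD)).toReal) •
          (ξ x • K ξ x)
        - Θ ((eLpNorm η (ENNReal.ofReal p) (volume.restrict torusD)).toReal) •
          (η x • K η x))
      (ENNReal.ofReal p) (volume.restrict torusD)
    ≤ ENNReal.ofReal (2 * Cp * (N + 1) + 2 * Cp * (N + 1) ^ 2) *
        eLpNorm (ξ - η) (ENNReal.ofReal p) (volume.restrict torusD) := by
  set μ := volume.restrict torusD with hμ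
  set q := ENNReal.ofReal p with hq
  set L : ℝ := 2 * Cp * (N + 1) + 2 * Cp * (N + 1) ^ 2 with hL
  have hq1 : (1 : ENNReal) ≤ q := ENNReal.one_le_ofReal.mpr (by linarith)
  set nξ := (eLpNorm ξ q μ).toReal with hnξ
  set nη := (eLpNorm η q μ).toReal with hnη
  have hξη : MemLp (ξ - η) q μ := hξ.sub hη
  set d := (eLpNorm (ξ - η) q μ).toReal with hd
  have hd0 : 0 ≤ d := ENNReal.toReal_nonneg
  have hnξ0 : 0 ≤ nξ := ENNReal.toReal_nonneg
  have hnη0 : 0 ≤ nη := ENNReal.toReal_nonneg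
  have hΘξ := hΘrange nξ hnξ0
  have hΘη := hΘrange nη hnη0
  -- Lipschitz bound on Θ
  have hlip : LipschitzWith 2 Θ := by
    refine lipschitzWith_of_nnnorm_deriv_le (hΘdiff.differentiable one_ne_zero) fun x => ?_
    rw [← NNReal.coe_le_coe, coe_nnnorm, Real.norm_eq_abs]
    exact_mod_cast hΘder x
  have hΘlip : |Θ nξ - Θ nη| ≤ 2 * |nξ - nη| := by
    have h := hlip.dist_le_mul nξ nη
    rwa [Real.dist_eq, Real.dist_eq] at h
  -- |nξ - nη| ≤ d
  have hdist : nξ - nη ≤ d := by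
    have h1 : eLpNorm ξ q μ ≤ eLpNorm (ξ - η) q μ + eLpNorm η q μ := by
      calc eLpNorm ξ q μ = eLpNorm ((ξ - η) + η) q μ := by rw [sub_add_cancel]
        _ ≤ _ := eLpNorm_add_le hξη.1 hη.1 hq1
    have hfin : eLpNorm (ξ - η) q μ + eLpNorm η q μ ≠ ⊤ :=
      ENNReal.add_ne_top.mpr ⟨hξη.2.ne, hη.2.ne⟩
    have h2 := ENNReal.toReal_mono hfin h1
    rw [ENNReal.toReal_add hξη.2.ne hη.2.ne] at h2
    linarith [h2]
  -- K is sub-linear a.e.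
  have hae : ∀ f : ℝ × ℝ → ℝ, MemLp f q μ →
      ∀ᵐ x ∂μ, ‖K f x‖ ≤ Cp * (eLpNorm f q μ).toReal := by
    intro f hf
    have h := hK f hf
    rw [eLpNorm_exponent_top] at h
    filter_upwards [ae_le_eLpNormEssSup (f := K f) (μ := μ)] with x hx
    have h2 : ‖K f x‖ₑ ≤ ENNReal.ofReal (Cp * (eLpNorm f q μ).toReal) :=
      hx.trans h
    rw [← ofReal_norm_eq_enorm] at h2
    exact (ENNReal.ofReal_le_ofReal_iff (by positivity)).mp h2
  -- K ξ - K η = K (ξ - η)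
  have hKsub : K ξ - K η = K (ξ - η) := by
    have h1 := hKadd (ξ - η) η
    rw [sub_add_cancel] at h1
    rw [h1]; abel
  set A : ℝ := Θ nξ * (Cp * nξ) with hA
  set B : ℝ := Θ nξ * (Cp * d) + |Θ nξ - Θ nη| * (Cp * nη) with hB
  clear_value nξ nη d L A B
  have hA0 : 0 ≤ A := by rw [hA]; exact mul_nonneg hΘξ.1 (mul_nonneg hCp.le hnξ0)
  have hB0 : 0 ≤ B := by
    rw [hB]
    exact add_nonneg (mul_nonneg hΘξ.1 (mul_nonneg hCp.le hd0))
      (mul_nonneg (abs_nonneg _) (mul_nonneg hCp.le hnη0))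
  -- pointwise bound
  have key : ∀ᵐ x ∂μ, ‖Θ nξ • (ξ x • K ξ x) - Θ nη • (η x • K η x)‖
      ≤ A * ‖ξ x - η x‖ + B * ‖η x‖ := by
    filter_upwards [hae ξ hξ, hae η hη, hae (ξ - η) hξη] with x h1' h2' h3'
    have h1 : ‖K ξ x‖ ≤ Cp * nξ := by rw [hnξ]; exact h1'
    have h2 : ‖K η x‖ ≤ Cp * nη := by rw [hnη]; exact h2'
    have h3 : ‖K (ξ - η) x‖ ≤ Cp * d := by rw [hd]; exact h3'
    have hdec : Θ nξ • (ξ x • K ξ x) - Θ nη • (η x • K η x)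
        = Θ nξ • ((ξ x - η x) • K ξ x)
          + (Θ nξ • (η x • K (ξ - η) x) + (Θ nξ - Θ nη) • (η x • K η x)) := by
      have hx : K (ξ - η) x = K ξ x - K η x := by
        rw [← hKsub]; rfl
      rw [hx]; module
    have e1 : ‖Θ nξ • ((ξ x - η x) • K ξ x)‖ = Θ nξ * (|ξ x - η x| * ‖K ξ x‖) := by
      rw [norm_smul, norm_smul, Real.norm_eq_abs, Real.norm_eq_abs, abs_of_nonneg hΘξ.1]
    have e2 : ‖Θ nξ • (η x • K (ξ - η) x)‖ = Θ nξ * (|η x| * ‖K (ξ - η) x‖) := by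
      rw [norm_smul, norm_smul, Real.norm_eq_abs, Real.norm_eq_abs, abs_of_nonneg hΘξ.1]
    have e3 : ‖(Θ nξ - Θ nη) • (η x • K η x)‖ = |Θ nξ - Θ nη| * (|η x| * ‖K η x‖) := by
      rw [norm_smul, norm_smul, Real.norm_eq_abs, Real.norm_eq_abs]
    have b1 : Θ nξ * (|ξ x - η x| * ‖K ξ x‖) ≤ A * |ξ x - η x| := by
      have : Θ nξ * (|ξ x - η x| * ‖K ξ x‖) ≤ Θ nξ * (|ξ x - η x| * (Cp * nξ)) :=
        mul_le_mul_of_nonneg_left (by gcongr) hΘξ.1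
      calc Θ nξ * (|ξ x - η x| * ‖K ξ x‖) ≤ Θ nξ * (|ξ x - η x| * (Cp * nξ)) := this
        _ = A * |ξ x - η x| := by rw [hA]; ring
    have b2 : Θ nξ * (|η x| * ‖K (ξ - η) x‖) ≤ Θ nξ * (Cp * d) * |η x| := by
      have : Θ nξ * (|η x| * ‖K (ξ - η) x‖) ≤ Θ nξ * (|η x| * (Cp * d)) :=
        mul_le_mul_of_nonneg_left (by gcongr) hΘξ.1
      calc Θ nξ * (|η x| * ‖K (ξ - η) x‖) ≤ Θ nξ * (|η x| * (Cp * d)) := this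
        _ = Θ nξ * (Cp * d) * |η x| := by ring
    have b3 : |Θ nξ - Θ nη| * (|η x| * ‖K η x‖)
        ≤ |Θ nξ - Θ nη| * (Cp * nη) * |η x| := by
      have : |Θ nξ - Θ nη| * (|η x| * ‖K η x‖)
          ≤ |Θ nξ - Θ nη| * (|η x| * (Cp * nη)) := by
        gcongr
      calc _ ≤ |Θ nξ - Θ nη| * (|η x| * (Cp * nη)) := this
        _ = |Θ nξ - Θ nη| * (Cp * nη) * |η x| := by ring
    calc ‖Θ nξ • (ξ x • K ξ x) - Θ nη • (η x • K η x)‖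
        ≤ ‖Θ nξ • ((ξ x - η x) • K ξ x)‖
          + (‖Θ nξ • (η x • K (ξ - η) x)‖ + ‖(Θ nξ - Θ nη) • (η x • K η x)‖) := by
          rw [hdec]; exact (norm_add_le _ _).trans (by gcongr; exact norm_add_le _ _)
      _ ≤ A * |ξ x - η x| + (Θ nξ * (Cp * d) * |η x| + |Θ nξ - Θ nη| * (Cp * nη) * |η x|) := by
          rw [e1, e2, e3]; exact add_le_add b1 (add_le_add b2 b3)
      _ = A * |ξ x - η x| + B * |η x| := by rw [hB]; ring
      _ = A * ‖ξ x - η x‖ + B * ‖η x‖ := by rw [Real.norm_eq_abs, Real.norm_eq_abs]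
  -- pass to eLpNorm
  have step1 : eLpNorm
      (fun x => Θ nξ • (ξ x • K ξ x) - Θ nη • (η x • K η x)) q μ
      ≤ eLpNorm (fun x => A * ‖ξ x - η x‖ + B * ‖η x‖) q μ :=
    eLpNorm_mono_ae_real key
  have hGeq : (fun x => A * ‖ξ x - η x‖ + B * ‖η x‖)
      = (A • fun x => ‖(ξ - η) x‖) + (B • fun x => ‖η x‖) := by
    funext x; simp [Pi.sub_apply, smul_eq_mul]
  have step2 : eLpNorm (fun x => A * ‖ξ x - η x‖ + B * ‖η x‖) q μ
      ≤ ENNReal.ofReal A * eLpNorm (ξ - η) q μ + ENNReal.ofReal B * eLpNorm η q μ := by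
    rw [hGeq]
    refine (eLpNorm_add_le ((hξη.1.norm).const_smul A) ((hη.1.norm).const_smul B) hq1).trans ?_
    rw [eLpNorm_const_smul, eLpNorm_const_smul, eLpNorm_norm, eLpNorm_norm,
      Real.enorm_eq_ofReal hA0, Real.enorm_eq_ofReal hB0]
  -- real arithmetic
  have c1 : Θ nξ * nξ ≤ N + 1 := by
    by_cases h : nξ ≤ N + 1
    · nlinarith [hΘξ.1, hΘξ.2]
    · rw [hΘzero nξ (by linarith [le_of_not_ge h])]; simp only [zero_mul]; linarith
  have c2 : Θ nξ * nη ≤ N + 1 := by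
    by_cases h : nξ ≤ N + 1
    · nlinarith [hΘξ.1, hΘξ.2]
    · rw [hΘzero nξ (by linarith [le_of_not_ge h])]; simp only [zero_mul]; linarith
  have c3 : |Θ nξ - Θ nη| * nη ^ 2 ≤ 2 * d * (N + 1) ^ 2 := by
    by_cases h : nη ≤ N + 1
    · have habs : |Θ nξ - Θ nη| ≤ 2 * d := by
        rw [abs_of_nonneg (by linarith : (0:ℝ) ≤ nξ - nη)] at hΘlip
        linarith
      have k1 : |Θ nξ - Θ nη| * nη ^ 2 ≤ 2 * d * nη ^ 2 :=
        mul_le_mul_of_nonneg_right habs (by positivity)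
      have k2 : 2 * d * nη ^ 2 ≤ 2 * d * (N + 1) ^ 2 :=
        mul_le_mul_of_nonneg_left (by nlinarith) (by linarith)
      linarith
    · have hη' : N + 1 ≤ nη := le_of_not_ge h
      calc |Θ nξ - Θ nη| * nη ^ 2 = 0 := by
            rw [hΘzero nη hη', hΘzero nξ (by linarith)]; simp
        _ ≤ 2 * d * (N + 1) ^ 2 := mul_nonneg (by linarith) (by positivity)
  have hreal : A * d + B * nη ≤ L * d := by
    have t1 : A * d ≤ Cp * (N + 1) * d := by
      calc A * d = Cp * d * (Θ nξ * nξ) := by rw [hA]; ring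
        _ ≤ Cp * d * (N + 1) := mul_le_mul_of_nonneg_left c1 (mul_nonneg hCp.le hd0)
        _ = Cp * (N + 1) * d := by ring
    have t2 : Θ nξ * (Cp * d) * nη ≤ Cp * (N + 1) * d := by
      calc Θ nξ * (Cp * d) * nη = Cp * d * (Θ nξ * nη) := by ring
        _ ≤ Cp * d * (N + 1) := mul_le_mul_of_nonneg_left c2 (mul_nonneg hCp.le hd0)
        _ = Cp * (N + 1) * d := by ring
    have t3 : |Θ nξ - Θ nη| * (Cp * nη) * nη ≤ 2 * Cp * (N + 1) ^ 2 * d := by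
      calc |Θ nξ - Θ nη| * (Cp * nη) * nη = Cp * (|Θ nξ - Θ nη| * nη ^ 2) := by ring
        _ ≤ Cp * (2 * d * (N + 1) ^ 2) := mul_le_mul_of_nonneg_left c3 hCp.le
        _ = 2 * Cp * (N + 1) ^ 2 * d := by ring
    have hBexp : B * nη = Θ nξ * (Cp * d) * nη + |Θ nξ - Θ nη| * (Cp * nη) * nη := by
      rw [hB]; ring
    have hLd : L * d = Cp * (N + 1) * d + Cp * (N + 1) * d + 2 * Cp * (N + 1) ^ 2 * d := by
      rw [hL]; ring
    rw [hBexp]; linarith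
  -- combine in ℝ≥0∞
  have hΔ : eLpNorm (ξ - η) q μ = ENNReal.ofReal d := by
    rw [hd]; exact (ENNReal.ofReal_toReal hξη.2.ne).symm
  have hηe : eLpNorm η q μ = ENNReal.ofReal nη := by
    rw [hnη]; exact (ENNReal.ofReal_toReal hη.2.ne).symm
  calc eLpNorm (fun x => Θ nξ • (ξ x • K ξ x) - Θ nη • (η x • K η x)) q μ
      ≤ ENNReal.ofReal A * eLpNorm (ξ - η) q μ + ENNReal.ofReal B * eLpNorm η q μ :=
        step1.trans step2
    _ = ENNReal.ofReal (A * d + B * nη) := by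
        rw [hΔ, hηe, ← ENNReal.ofReal_mul hA0, ← ENNReal.ofReal_mul hB0,
          ← ENNReal.ofReal_add (mul_nonneg hA0 hd0) (mul_nonneg hB0 hnη0)]
    _ ≤ ENNReal.ofReal (L * d) := ENNReal.ofReal_le_ofReal hreal
    _ = ENNReal.ofReal L * eLpNorm (ξ - η) q μ := by
        rw [hΔ, ← ENNReal.ofReal_mul (by rw [hL]; positivity)]

theorem truncated_nonlinearity_lipschitz
    (p : ℝ) (hp : 2 < p) (N : ℝ) (hN : 1 ≤ N)
    (Θ : ℝ → ℝ) (hΘdiff : ContDiff ℝ 1 Θ)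
    (hΘrange : ∀ s : ℝ, 0 ≤ s → Θ s ∈ Set.Icc (0:ℝ) 1)
    (hΘone : ∀ s : ℝ, 0 ≤ s → s < N → Θ s = 1)
    (hΘzero : ∀ s : ℝ, N + 1 ≤ s → Θ s = 0)
    (hΘder : ∀ s : ℝ, |deriv Θ s| ≤ 2)
    (Cp : ℝ) (hCp : 0 < Cp)
    -- `K` is the (linear) Biot-Savart operator `ξ ↦ k * ξ`
    (K : (ℝ × ℝ → ℝ) → (ℝ × ℝ → ℝ × ℝ))
    (hKadd : ∀ ξ η : ℝ × ℝ → ℝ, K (ξ + η) = K ξ + K η)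
    (hKsmul : ∀ (a : ℝ) (ξ : ℝ × ℝ → ℝ), K (a • ξ) = a • K ξ)
    -- the Biot-Savart estimate `‖k*ξ‖_{L^∞} ≤ C_p ‖ξ‖_{L^p}`
    (hK : ∀ ξ : ℝ × ℝ → ℝ, MemLp ξ (ENNReal.ofReal p) (volume.restrict torusD) →
      eLpNorm (K ξ) ⊤ (volume.restrict torusD)
        ≤ ENNReal.ofReal (Cp * (eLpNorm ξ (ENNReal.ofReal p) (volume.restrict torusD)).toReal)) :
    ∃ L : ℝ, 0 < L ∧
      ∀ ξ η : ℝ × ℝ → ℝ,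
        MemLp ξ (ENNReal.ofReal p) (volume.restrict torusD) →
        MemLp η (ENNReal.ofReal p) (volume.restrict torusD) →
        eLpNorm
          (fun x => Θ ((eLpNorm ξ (ENNReal.ofReal p) (volume.restrict torusD)).toReal) •
              (ξ x • K ξ x)
            - Θ ((eLpNorm η (ENNReal.ofReal p) (volume.restrict torusD)).toReal) •
              (η x • K η x))
          (ENNReal.ofReal p) (volume.restrict torusD)
        ≤ ENNReal.ofReal L *
            eLpNorm (ξ - η) (ENNReal.ofReal p) (volume.restrict torusD) := by
  refine ⟨2 * Cp * (N + 1) + 2 * Cp * (N + 1) ^ 2, by positivity, ?_⟩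
  intro ξ η hξ hη
  rcases le_total ((eLpNorm η (ENNReal.ofReal p) (volume.restrict torusD)).toReal)
      ((eLpNorm ξ (ENNReal.ofReal p) (volume.restrict torusD)).toReal) with hle | hle
  · exact trunc_lip_aux p hp N hN Θ hΘdiff hΘrange hΘzero hΘder Cp hCp K hKadd hK ξ η hξ hη hle
  · have h := trunc_lip_aux p hp N hN Θ hΘdiff hΘrange hΘzero hΘder Cp hCp K hKadd hK η ξ hη hξ hle
    have hfun : (fun x => Θ ((eLpNorm ξ (ENNReal.ofReal p) (volume.restrict torusD)).toReal) •
          (ξ x • K ξ x)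
        - Θ ((eLpNorm η (ENNReal.ofReal p) (volume.restrict torusD)).toReal) •
          (η x • K η x))
        = -(fun x => Θ ((eLpNorm η (ENNReal.ofReal p) (volume.restrict torusD)).toReal) •
          (η x • K η x)
        - Θ ((eLpNorm ξ (ENNReal.ofReal p) (volume.restrict torusD)).toReal) •
          (ξ x • K ξ x)) := by
      funext x; simp [neg_sub]
    rw [hfun, eLpNorm_neg, ← eLpNorm_sub_comm]
    exact h
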